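/- Let $\hat{X}$ be a function of $X$, let $X - U' - U$ be a Markov chain of finitely supported random variables, and suppose $\hat{X}$ is independent of $U$. Then $I(X;U) \leq I(X;U') - I(\hat{X};U')$. -/

import Mathlib

open Finset

/-- Shannon entropy (base 2) of a pmf on a finite alphabet. -/
noncomputable def ent {α : Type*} [Fintype α] (p : α → ℝ) : ℝ :=
  ∑ a, -(p a * Real.logb 2 (p a))

/-- Mutual information (base 2) of a joint pmf on a product of finite alphabets. -/
noncomputable def mi {α β : Type*} [Fintype α] [Fintype β] (q : α × β → ℝ) : ℝ :=
  ent (fun a => ∑ b, q (a, b)) + ent (fun b => ∑ a, q (a, b)) - ent q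

set_option linter.unusedSectionVars false

lemma term_bound {p3 xu' hu' hx xu pu pu' uu : ℝ}
    (hp3 : 0 ≤ p3) (huu : 0 ≤ uu) (hhu' : 0 ≤ hu') (hxu : 0 ≤ xu)
    (hpu' : 0 ≤ pu') (hhx : 0 ≤ hx) (hpu : 0 ≤ pu)
    (hpos : 0 < p3 → 0 < xu' ∧ 0 < hu' ∧ 0 < hx ∧ 0 < xu ∧ 0 < pu ∧ 0 < pu' ∧ 0 < uu)
    (hmark : 0 < p3 → p3 * pu' = xu' * uu) :
    (Real.log 2)⁻¹ * (p3 - uu * hu' * xu / (pu' * hx * pu))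
      ≤ p3 * (Real.logb 2 xu' - Real.logb 2 hu' + Real.logb 2 hx
          - Real.logb 2 xu + Real.logb 2 pu) := by
  have hl2 : 0 < Real.log 2 := Real.log_pos one_lt_two
  have hc : 0 < (Real.log 2)⁻¹ := inv_pos.mpr hl2
  rcases eq_or_lt_of_le hp3 with h | h
  · have hf : 0 ≤ uu * hu' * xu / (pu' * hx * pu) := by positivity
    rw [← h]
    nlinarith
  · obtain ⟨h1, h2, h3, h4, h5, h6, h7⟩ := hpos h
    have mark := hmark h
    set A := xu' * hx * pu / (hu' * xu) with hAdef
    have hA : 0 < A := by positivity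
    have hinv : 1 - A⁻¹ ≤ Real.log A := by
      have hh := Real.log_le_sub_one_of_pos (inv_pos.mpr hA)
      rw [Real.log_inv] at hh; linarith
    have hlogsplit : Real.logb 2 xu' - Real.logb 2 hu' + Real.logb 2 hx
        - Real.logb 2 xu + Real.logb 2 pu = Real.log A / Real.log 2 := by
      simp only [Real.logb, hAdef]
      rw [Real.log_div (by positivity) (by positivity),
        Real.log_mul (by positivity) (by positivity),
        Real.log_mul (by positivity) (by positivity),
        Real.log_mul (by positivity) (by positivity)]
      ring
    have hfA : p3 * A⁻¹ = uu * hu' * xu / (pu' * hx * pu) := by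
      rw [hAdef]
      field_simp
      linear_combination mark
    have key : p3 * (1 - A⁻¹) ≤ p3 * Real.log A :=
      mul_le_mul_of_nonneg_left hinv h.le
    rw [hlogsplit, ← hfA]
    rw [div_eq_mul_inv]
    nlinarith [mul_le_mul_of_nonneg_left key hc.le]


lemma mi_eq {α β : Type*} [Fintype α] [Fintype β] (q : α × β → ℝ) :
    mi q = ∑ a, ∑ b, q (a, b) *
      (Real.logb 2 (q (a, b)) - Real.logb 2 (∑ b', q (a, b'))
        - Real.logb 2 (∑ a', q (a', b))) := by
  have h1 : ent (fun a => ∑ b, q (a, b))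
      = ∑ a, ∑ b, -(q (a, b) * Real.logb 2 (∑ b', q (a, b'))) := by
    unfold ent
    exact Finset.sum_congr rfl fun a _ => by
      rw [Finset.sum_neg_distrib, Finset.sum_mul]
  have h2 : ent (fun b => ∑ a, q (a, b))
      = ∑ a, ∑ b, -(q (a, b) * Real.logb 2 (∑ a', q (a', b))) := by
    unfold ent
    rw [Finset.sum_comm]
    exact Finset.sum_congr rfl fun b _ => by
      rw [Finset.sum_neg_distrib, Finset.sum_mul]
  have h3 : ent q = ∑ a, ∑ b, -(q (a, b) * Real.logb 2 (q (a, b))) := by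
    unfold ent
    rw [Fintype.sum_prod_type]
  unfold mi
  rw [h1, h2, h3, ← Finset.sum_add_distrib, ← Finset.sum_sub_distrib]
  refine Finset.sum_congr rfl fun a _ => ?_
  rw [← Finset.sum_add_distrib, ← Finset.sum_sub_distrib]
  exact Finset.sum_congr rfl fun b _ => by ring

lemma sum3_mul {A B C : Type*} [Fintype A] [Fintype B] [Fintype C] (c : ℝ) (f : A → B → C → ℝ) :
    ∑ a, ∑ b, ∑ d, c * f a b d = c * ∑ a, ∑ b, ∑ d, f a b d := by
  rw [Finset.mul_sum]
  exact Finset.sum_congr rfl fun a _ => by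
    rw [Finset.mul_sum]
    exact Finset.sum_congr rfl fun b _ => by rw [Finset.mul_sum]

lemma sum3_sub {A B C : Type*} [Fintype A] [Fintype B] [Fintype C] (f g : A → B → C → ℝ) :
    ∑ a, ∑ b, ∑ d, (f a b d - g a b d)
      = (∑ a, ∑ b, ∑ d, f a b d) - ∑ a, ∑ b, ∑ d, g a b d := by
  rw [← Finset.sum_sub_distrib]
  exact Finset.sum_congr rfl fun a _ => by
    rw [← Finset.sum_sub_distrib]
    exact Finset.sum_congr rfl fun b _ => Finset.sum_sub_distrib _ _


section aux
variable {α γ' γ δ : Type*} [Fintype α] [Fintype γ'] [Fintype γ] [Fintype δ] [DecidableEq δ]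

noncomputable def pX (p : α × γ' × γ → ℝ) (x : α) : ℝ := ∑ u', ∑ v, p (x, u', v)
noncomputable def pU' (p : α × γ' × γ → ℝ) (u' : γ') : ℝ := ∑ x, ∑ v, p (x, u', v)
noncomputable def pU (p : α × γ' × γ → ℝ) (u : γ) : ℝ := ∑ x, ∑ u', p (x, u', u)
noncomputable def pXU' (p : α × γ' × γ → ℝ) (x : α) (u' : γ') : ℝ := ∑ v, p (x, u', v)
noncomputable def pXU (p : α × γ' × γ → ℝ) (x : α) (u : γ) : ℝ := ∑ u', p (x, u', u)
noncomputable def pU'U (p : α × γ' × γ → ℝ) (u' : γ') (u : γ) : ℝ := ∑ x, p (x, u', u)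
noncomputable def pHX (p : α × γ' × γ → ℝ) (g : α → δ) (d : δ) : ℝ :=
  ∑ x ∈ Finset.univ.filter (fun x => g x = d), pX p x
noncomputable def pHU' (p : α × γ' × γ → ℝ) (g : α → δ) (d : δ) (u' : γ') : ℝ :=
  ∑ x ∈ Finset.univ.filter (fun x => g x = d), pXU' p x u'

lemma L2 (p : α × γ' × γ → ℝ) :
    mi (fun w : α × γ' => ∑ v, p (w.1, w.2, v))
      = ∑ x, ∑ u', ∑ u, p (x, u', u) *
          (Real.logb 2 (pXU' p x u') - Real.logb 2 (pX p x) - Real.logb 2 (pU' p u')) := by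
  rw [mi_eq]
  refine Finset.sum_congr rfl fun x _ => Finset.sum_congr rfl fun u' _ => ?_
  simp only [pXU', pX, pU']
  rw [Finset.sum_mul]

lemma L1 (p : α × γ' × γ → ℝ) :
    mi (fun w : α × γ => ∑ u', p (w.1, u', w.2))
      = ∑ x, ∑ u', ∑ u, p (x, u', u) *
          (Real.logb 2 (pXU p x u) - Real.logb 2 (pX p x) - Real.logb 2 (pU p u)) := by
  rw [mi_eq]
  refine Finset.sum_congr rfl fun x _ => ?_
  rw [show (∑ b' : γ, ∑ u', p (x, u', b')) = pX p x from Finset.sum_comm]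
  exact Eq.trans (Finset.sum_congr rfl fun u _ => Finset.sum_mul _ _ _) Finset.sum_comm

lemma L3 (p : α × γ' × γ → ℝ) (g : α → δ) :
    mi (fun w : δ × γ' => ∑ x ∈ Finset.univ.filter (fun x => g x = w.1), ∑ v, p (x, w.2, v))
      = ∑ x, ∑ u', ∑ u, p (x, u', u) *
          (Real.logb 2 (pHU' p g (g x) u') - Real.logb 2 (pHX p g (g x))
            - Real.logb 2 (pU' p u')) := by
  rw [mi_eq]
  simp only []
  calc (∑ d, ∑ u', (∑ x ∈ Finset.univ.filter (fun x => g x = d), ∑ v, p (x, u', v)) *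
          (Real.logb 2 (∑ x ∈ Finset.univ.filter (fun x => g x = d), ∑ v, p (x, u', v))
            - Real.logb 2 (∑ b', ∑ x ∈ Finset.univ.filter (fun x => g x = d), ∑ v, p (x, b', v))
            - Real.logb 2 (∑ a', ∑ x ∈ Finset.univ.filter (fun x => g x = a'), ∑ v, p (x, u', v))))
      = ∑ d, ∑ u', ∑ x ∈ Finset.univ.filter (fun x => g x = d), pXU' p x u' *
          (Real.logb 2 (pHU' p g (g x) u') - Real.logb 2 (pHX p g (g x))
            - Real.logb 2 (pU' p u')) := by
        refine Finset.sum_congr rfl fun d _ => ?_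
        rw [show (∑ b' : γ', ∑ x ∈ Finset.univ.filter (fun x => g x = d), ∑ v, p (x, b', v))
            = pHX p g d from Finset.sum_comm]
        refine Finset.sum_congr rfl fun u' _ => ?_
        rw [show (∑ a' : δ, ∑ x ∈ Finset.univ.filter (fun x => g x = a'), ∑ v, p (x, u', v))
            = pU' p u' from Finset.sum_fiberwise _ _ _]
        rw [Finset.sum_mul]
        refine Finset.sum_congr rfl fun x hx => ?_
        rw [(Finset.mem_filter.mp hx).2]
        rfl
    _ = ∑ u', ∑ d, ∑ x ∈ Finset.univ.filter (fun x => g x = d), pXU' p x u' *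
          (Real.logb 2 (pHU' p g (g x) u') - Real.logb 2 (pHX p g (g x))
            - Real.logb 2 (pU' p u')) := Finset.sum_comm
    _ = ∑ u', ∑ x, pXU' p x u' *
          (Real.logb 2 (pHU' p g (g x) u') - Real.logb 2 (pHX p g (g x))
            - Real.logb 2 (pU' p u')) :=
        Finset.sum_congr rfl fun u' _ => Finset.sum_fiberwise _ _ _
    _ = ∑ x, ∑ u', pXU' p x u' *
          (Real.logb 2 (pHU' p g (g x) u') - Real.logb 2 (pHX p g (g x))
            - Real.logb 2 (pU' p u')) := Finset.sum_comm
    _ = ∑ x, ∑ u', ∑ u, p (x, u', u) *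
          (Real.logb 2 (pHU' p g (g x) u') - Real.logb 2 (pHX p g (g x))
            - Real.logb 2 (pU' p u')) :=
        Finset.sum_congr rfl fun x _ => Finset.sum_congr rfl fun u' _ =>
          Finset.sum_mul _ _ _

noncomputable def fd (p : α × γ' × γ → ℝ) (g : α → δ) (x : α) (u' : γ') (u : γ) : ℝ :=
  pU'U p u' u * pHU' p g (g x) u' * pXU p x u / (pU' p u' * pHX p g (g x) * pU p u)

variable (p : α × γ' × γ → ℝ) (g : α → δ) (hnn : ∀ w, 0 ≤ p w)

include hnn

lemma pXU'_nn (x : α) (u' : γ') : 0 ≤ pXU' p x u' := Finset.sum_nonneg fun _ _ => hnn _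
lemma pXU_nn (x : α) (u : γ) : 0 ≤ pXU p x u := Finset.sum_nonneg fun _ _ => hnn _
lemma pX_nn (x : α) : 0 ≤ pX p x :=
  Finset.sum_nonneg fun _ _ => Finset.sum_nonneg fun _ _ => hnn _
lemma pU'_nn (u' : γ') : 0 ≤ pU' p u' :=
  Finset.sum_nonneg fun _ _ => Finset.sum_nonneg fun _ _ => hnn _
lemma pU_nn (u : γ) : 0 ≤ pU p u :=
  Finset.sum_nonneg fun _ _ => Finset.sum_nonneg fun _ _ => hnn _
lemma pU'U_nn (u' : γ') (u : γ) : 0 ≤ pU'U p u' u := Finset.sum_nonneg fun _ _ => hnn _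
lemma pHX_nn (d : δ) : 0 ≤ pHX p g d := Finset.sum_nonneg fun x _ => pX_nn p hnn x
lemma pHU'_nn (d : δ) (u' : γ') : 0 ≤ pHU' p g d u' :=
  Finset.sum_nonneg fun x _ => pXU'_nn p hnn x u'

lemma hx_bound
    (hindep : ∀ (d : δ) (u : γ),
      (∑ x ∈ Finset.univ.filter (fun x => g x = d), ∑ u', p (x, u', u))
        = (∑ x ∈ Finset.univ.filter (fun x => g x = d), ∑ u', ∑ v, p (x, u', v))
            * (∑ x, ∑ u', p (x, u', u)))
    (u' : γ') (u : γ) :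
    (∑ x, fd p g x u' u) ≤ pU'U p u' u := by
  have huu := pU'U_nn p hnn u' u
  calc ∑ x, fd p g x u' u
      = ∑ d, ∑ x ∈ Finset.univ.filter (fun x => g x = d), fd p g x u' u :=
        (Finset.sum_fiberwise _ _ _).symm
    _ = ∑ d, ∑ x ∈ Finset.univ.filter (fun x => g x = d),
          pXU p x u * (pU'U p u' u * pHU' p g d u' / (pU' p u' * pHX p g d * pU p u)) := by
        refine Finset.sum_congr rfl fun d _ => Finset.sum_congr rfl fun x hx => ?_
        unfold fd
        rw [(Finset.mem_filter.mp hx).2]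
        ring
    _ = ∑ d, (∑ x ∈ Finset.univ.filter (fun x => g x = d), pXU p x u)
          * (pU'U p u' u * pHU' p g d u' / (pU' p u' * pHX p g d * pU p u)) :=
        Finset.sum_congr rfl fun d _ => (Finset.sum_mul _ _ _).symm
    _ = ∑ d, (pHX p g d * pU p u)
          * (pU'U p u' u * pHU' p g d u' / (pU' p u' * pHX p g d * pU p u)) := by
        refine Finset.sum_congr rfl fun d _ => ?_
        congr 1
        exact hindep d u
    _ ≤ ∑ d, pU'U p u' u * pHU' p g d u' / pU' p u' := by
        refine Finset.sum_le_sum fun d _ => ?_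
        have h1 := pHX_nn p g hnn d
        have h2 := pU_nn p hnn u
        have h3 := pU'_nn p hnn u'
        have h4 := pHU'_nn p g hnn d u'
        rcases eq_or_lt_of_le h1 with hz | hz
        · rw [← hz]
          simp
          positivity
        rcases eq_or_lt_of_le h2 with hz2 | hz2
        · rw [← hz2]
          simp
          positivity
        rcases eq_or_lt_of_le h3 with hz3 | hz3
        · rw [← hz3]
          simp
        · have h1' := hz.ne'
          have h2' := hz2.ne'
          have h3' := hz3.ne'
          refine le_of_eq ?_
          field_simp
    _ = pU'U p u' u * (∑ d, pHU' p g d u') / pU' p u' := by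
        rw [← Finset.sum_div, ← Finset.mul_sum]
    _ = pU'U p u' u * pU' p u' / pU' p u' := by
        rw [show (∑ d, pHU' p g d u') = pU' p u' from Finset.sum_fiberwise _ _ _]
    _ ≤ pU'U p u' u := by
        rcases eq_or_ne (pU' p u') 0 with h | h
        · simp [h]; exact huu
        · rw [mul_div_cancel_right₀ _ h]


end aux


/-- If `X̂ = g(X)`, `X - U' - U` is a Markov chain, and `X̂ ⟂ U`, then
`I(X;U) ≤ I(X;U') - I(X̂;U')`. -/
theorem stmt12 {α γ' γ δ : Type*} [Fintype α] [Fintype γ'] [Fintype γ] [Fintype δ]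
    [DecidableEq δ]
    (p : α × γ' × γ → ℝ) (hnn : ∀ w, 0 ≤ p w) (hsum : ∑ w, p w = 1)
    (g : α → δ)
    (hmarkov : ∀ (x : α) (u' : γ') (u : γ),
      0 < ∑ x', ∑ v, p (x', u', v) →
      p (x, u', u) * (∑ x', ∑ v, p (x', u', v))
        = (∑ v, p (x, u', v)) * (∑ x', p (x', u', u)))
    (hindep : ∀ (d : δ) (u : γ),
      (∑ x ∈ Finset.univ.filter (fun x => g x = d), ∑ u', p (x, u', u))
        = (∑ x ∈ Finset.univ.filter (fun x => g x = d), ∑ u', ∑ v, p (x, u', v))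
            * (∑ x, ∑ u', p (x, u', u))) :
    mi (fun w : α × γ => ∑ u', p (w.1, u', w.2))
      ≤ mi (fun w : α × γ' => ∑ v, p (w.1, w.2, v))
        - mi (fun w : δ × γ' =>
            ∑ x ∈ Finset.univ.filter (fun x => g x = w.1), ∑ v, p (x, w.2, v)) := by
  classical
  rw [L1 p, L2 p, L3 p g, ← sub_nonneg]
  have hc : (0:ℝ) ≤ (Real.log 2)⁻¹ := inv_nonneg.mpr (Real.log_nonneg one_le_two)
  have hone : ∑ x, ∑ u', ∑ u, p (x, u', u) = 1 := by
    rw [← hsum, Fintype.sum_prod_type]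
    exact Finset.sum_congr rfl fun x _ => (Fintype.sum_prod_type (fun y : γ' × γ => p (x, y))).symm
  have honeU : ∑ u', ∑ u, pU'U p u' u = 1 := by
    rw [← hone]
    calc ∑ u', ∑ u, ∑ x, p (x, u', u)
        = ∑ u', ∑ x, ∑ u, p (x, u', u) :=
          Finset.sum_congr rfl fun _ _ => Finset.sum_comm
      _ = ∑ x, ∑ u', ∑ u, p (x, u', u) := Finset.sum_comm
  have hfle : (∑ x, ∑ u', ∑ u, fd p g x u' u) ≤ 1 := by
    calc ∑ x, ∑ u', ∑ u, fd p g x u' u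
        = ∑ u', ∑ x, ∑ u, fd p g x u' u := Finset.sum_comm
      _ = ∑ u', ∑ u, ∑ x, fd p g x u' u :=
          Finset.sum_congr rfl fun _ _ => Finset.sum_comm
      _ ≤ ∑ u', ∑ u, pU'U p u' u :=
          Finset.sum_le_sum fun u' _ => Finset.sum_le_sum fun u _ =>
            hx_bound p g hnn hindep u' u
      _ = 1 := honeU
  have hbound : ∀ x u' u, (Real.log 2)⁻¹ * (p (x, u', u) - fd p g x u' u)
      ≤ p (x, u', u) * (Real.logb 2 (pXU' p x u') - Real.logb 2 (pHU' p g (g x) u')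
          + Real.logb 2 (pHX p g (g x)) - Real.logb 2 (pXU p x u)
          + Real.logb 2 (pU p u)) := by
    intro x u' u
    have hxmem : x ∈ Finset.univ.filter (fun x' => g x' = g x) :=
      Finset.mem_filter.mpr ⟨Finset.mem_univ x, rfl⟩
    have hxu'le : p (x, u', u) ≤ pXU' p x u' :=
      Finset.single_le_sum (fun v _ => hnn (x, u', v)) (Finset.mem_univ u)
    have hpu'le : pXU' p x u' ≤ pU' p u' :=
      Finset.single_le_sum (fun x' _ => pXU'_nn p hnn x' u') (Finset.mem_univ x)
    refine term_bound (hnn _) (pU'U_nn p hnn u' u) (pHU'_nn p g hnn _ u')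
      (pXU_nn p hnn x u) (pU'_nn p hnn u') (pHX_nn p g hnn _) (pU_nn p hnn u) ?_ ?_
    · intro hp
      have hxu' : 0 < pXU' p x u' := lt_of_lt_of_le hp hxu'le
      have hhu' : 0 < pHU' p g (g x) u' := lt_of_lt_of_le hxu'
        (Finset.single_le_sum (fun x' _ => pXU'_nn p hnn x' u') hxmem)
      have hpX : 0 < pX p x := lt_of_lt_of_le hxu'
        (Finset.single_le_sum (fun u'' _ => pXU'_nn p hnn x u'') (Finset.mem_univ u'))
      have hhx : 0 < pHX p g (g x) := lt_of_lt_of_le hpX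
        (Finset.single_le_sum (fun x' _ => pX_nn p hnn x') hxmem)
      have hxu : 0 < pXU p x u := lt_of_lt_of_le hp
        (Finset.single_le_sum (fun u'' _ => hnn (x, u'', u)) (Finset.mem_univ u'))
      have hpu : 0 < pU p u := lt_of_lt_of_le hxu
        (Finset.single_le_sum (fun x' _ => pXU_nn p hnn x' u) (Finset.mem_univ x))
      have hpu' : 0 < pU' p u' := lt_of_lt_of_le hxu' hpu'le
      have huu : 0 < pU'U p u' u := lt_of_lt_of_le hp
        (Finset.single_le_sum (fun x' _ => hnn (x', u', u)) (Finset.mem_univ x))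
      exact ⟨hxu', hhu', hhx, hxu, hpu, hpu', huu⟩
    · intro hp
      have hpu' : 0 < pU' p u' := lt_of_lt_of_le (lt_of_lt_of_le hp hxu'le) hpu'le
      exact hmarkov x u' u hpu'
  calc (0:ℝ)
      ≤ (Real.log 2)⁻¹ * (1 - ∑ x, ∑ u', ∑ u, fd p g x u' u) :=
        mul_nonneg hc (by linarith)
    _ = ∑ x, ∑ u', ∑ u, (Real.log 2)⁻¹ * (p (x, u', u) - fd p g x u' u) := by
        rw [sum3_mul, sum3_sub, hone]
    _ ≤ ∑ x, ∑ u', ∑ u, p (x, u', u) *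
          (Real.logb 2 (pXU' p x u') - Real.logb 2 (pHU' p g (g x) u')
            + Real.logb 2 (pHX p g (g x)) - Real.logb 2 (pXU p x u)
            + Real.logb 2 (pU p u)) :=
        Finset.sum_le_sum fun x _ => Finset.sum_le_sum fun u' _ =>
          Finset.sum_le_sum fun u _ => hbound x u' u
    _ = (∑ x, ∑ u', ∑ u, p (x, u', u) *
          (Real.logb 2 (pXU' p x u') - Real.logb 2 (pX p x) - Real.logb 2 (pU' p u')))
        - (∑ x, ∑ u', ∑ u, p (x, u', u) *
          (Real.logb 2 (pHU' p g (g x) u') - Real.logb 2 (pHX p g (g x))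
            - Real.logb 2 (pU' p u')))
        - (∑ x, ∑ u', ∑ u, p (x, u', u) *
          (Real.logb 2 (pXU p x u) - Real.logb 2 (pX p x) - Real.logb 2 (pU p u))) := by
        rw [← sum3_sub, ← sum3_sub]
        refine Finset.sum_congr rfl fun x _ => Finset.sum_congr rfl fun u' _ =>
          Finset.sum_congr rfl fun u _ => ?_
        ring
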